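/- arXiv:1210.5153 — 2 statements merged into one kernel-verified Lean document; each statement's English description precedes it below -/
import Mathlib

section
/- Fix positive reals μ, β, κ and set R₀ = β/(μ + κ). Define the 1D SIS Hamiltonian H(x_I, p_I) = β x_I (1 - x_I)(e^{p_I} - 1) + (μ + κ) x_I (e^{-p_I} - 1). Then for every x_I with 0 ≤ x_I < 1 and R₀(1 - x_I) > 0, the momentum p_I = -ln(R₀(1 - x_I)) satisfies H(x_I, p_I) = 0. That is, the optimal extinction path of the 1D SIS model is given explicitly by p_I(x_I) = -ln(R₀(1 - x_I)). -/
/-- For the 1D SIS Hamiltonian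
`H(x_I, p_I) = β x_I (1 - x_I)(e^{p_I} - 1) + (μ + κ) x_I (e^{-p_I} - 1)` with
`μ, β, κ > 0` and `R₀ = β/(μ + κ)`, for every `0 ≤ x_I < 1` with
`R₀(1 - x_I) > 0`, the momentum `p_I = -ln(R₀(1 - x_I))` satisfies
`H(x_I, p_I) = 0`: the optimal extinction path is
`p_I(x_I) = -ln(R₀(1 - x_I))`. -/
theorem sis_1d_optimal_path_zero_energy
    (μ β κ : ℝ) (hμ : 0 < μ) (hβ : 0 < β) (hκ : 0 < κ)
    (R₀ : ℝ) (hR₀ : R₀ = β / (μ + κ)) :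
    ∀ xI : ℝ, 0 ≤ xI → xI < 1 → 0 < R₀ * (1 - xI) →
      β * xI * (1 - xI) * (Real.exp (-Real.log (R₀ * (1 - xI))) - 1)
        + (μ + κ) * xI * (Real.exp (-(-Real.log (R₀ * (1 - xI)))) - 1) = 0 := by
  intro xI hx0 hx1 hpos
  have hy : R₀ * (1 - xI) ≠ 0 := ne_of_gt hpos
  rw [neg_neg, Real.exp_log hpos, Real.exp_neg, Real.exp_log hpos, hR₀]
  have hμκ : μ + κ ≠ 0 := by positivity
  have h1 : (1 : ℝ) - xI ≠ 0 := by linarith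
  field_simp
  ring
end

section
/- For every real R₀ > 1, the action along the optimal extinction path of the 1D SIS model satisfies R = ∫_{1 - 1/R₀}^{0} (-ln(R₀(1 - x))) dx = ln R₀ + 1/R₀ - 1. -/
/-- For every real `R₀ > 1`, the action along the optimal
extinction path of the 1D SIS model satisfies
`R = ∫_{1 - 1/R₀}^{0} (-ln(R₀(1 - x))) dx = ln R₀ + 1/R₀ - 1`. -/
theorem sis_1d_action_formula (R₀ : ℝ) (hR₀ : 1 < R₀) :
    (∫ x in (1 - 1 / R₀)..(0 : ℝ), -Real.log (R₀ * (1 - x)))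
      = Real.log R₀ + 1 / R₀ - 1 := by
  have hR0 : (0:ℝ) < R₀ := by linarith
  have hinv : 0 < 1 / R₀ := by positivity
  have hinv1 : 1 / R₀ < 1 := by
    rw [div_lt_one hR0]; linarith
  set a : ℝ := 1 - 1 / R₀ with ha
  have haI : Set.uIcc a 0 = Set.Icc 0 a := by
    have ha0 : (0:ℝ) ≤ a := by rw [ha]; linarith
    rw [Set.uIcc_of_ge ha0]
  have hpos : ∀ x ∈ Set.uIcc a 0, 0 < 1 - x := by
    intro x hx
    rw [haI] at hx
    have := hx.2
    have : x ≤ a := hx.2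
    simp only [ha] at this
    linarith
  set F : ℝ → ℝ := fun x => (1 - x) * Real.log (1 - x) + x - x * Real.log R₀ with hF
  have hderiv : ∀ x ∈ Set.uIcc a 0,
      HasDerivAt F (-Real.log (R₀ * (1 - x))) x := by
    intro x hx
    have h1 : 0 < 1 - x := hpos x hx
    have d1 : HasDerivAt (fun x : ℝ => 1 - x) (-1) x := by
      simpa using (hasDerivAt_id x).const_sub 1
    have d2 : HasDerivAt (fun x : ℝ => Real.log (1 - x)) (-1 / (1 - x)) x := by
      have : HasDerivAt (fun x : ℝ => Real.log (1 - x)) ((1 - x)⁻¹ * -1) x :=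
        (Real.hasDerivAt_log h1.ne').comp x d1
      convert this using 1
      ring
    have d3 : HasDerivAt (fun x : ℝ => (1 - x) * Real.log (1 - x))
        ((-1) * Real.log (1 - x) + (1 - x) * (-1 / (1 - x))) x := d1.mul d2
    have d4 : HasDerivAt F
        (((-1) * Real.log (1 - x) + (1 - x) * (-1 / (1 - x))) + 1 - 1 * Real.log R₀) x := by
      exact (d3.add (hasDerivAt_id x)).sub ((hasDerivAt_id x).mul_const _)
    convert d4 using 1
    rw [Real.log_mul hR0.ne' h1.ne']
    field_simp
    ring
  have hcont : IntervalIntegrable (fun x => -Real.log (R₀ * (1 - x)))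
      MeasureTheory.volume a 0 := by
    apply ContinuousOn.intervalIntegrable
    apply ContinuousOn.neg
    apply ContinuousOn.log
    · exact (continuousOn_const.mul (continuousOn_const.sub continuousOn_id))
    · intro x hx
      have := hpos x hx
      positivity
  have := intervalIntegral.integral_eq_sub_of_hasDerivAt hderiv hcont
  rw [this]
  have hFa : F a = (1 / R₀) * Real.log (1 / R₀) + a - a * Real.log R₀ := by
    simp only [hF, ha]; ring_nf
  have hF0 : F 0 = 0 := by simp [hF]
  rw [hF0, hFa, Real.log_div one_ne_zero hR0.ne', Real.log_one, ha]
  ring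
end
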